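/- Consider vectors y₁ᵗ, …, yₙᵗ ∈ ℝ^p generated by the update yᵢᵗ = Σⱼ wᵢⱼ yⱼᵗ⁻¹ + (n/T)·vᵢᵗ with yᵢ⁰ = 0, where W = (wᵢⱼ) is symmetric doubly stochastic with ‖W^k − (1/n)1ₙ1ₙᵀ‖ ≤ β^k for all k ≥ 1 and some β ∈ [0,1), and ‖(v₁ᵗ; …; vₙᵗ)‖ ≤ D for all t. Then for every i and every t ≤ T, ‖yᵢᵗ − ȳᵗ‖ ≤ n^{3/2}·D / (T·(1−β)), where ȳᵗ = (1/n)·Σᵢ yᵢᵗ. -/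

import Mathlib

open Finset in
lemma stmt7_sum_apply {n p : ℕ} (s : Finset (Fin n)) (g : Fin n → EuclideanSpace ℝ (Fin p))
    (k : Fin p) : (∑ j ∈ s, g j) k = ∑ j ∈ s, g j k := by
  induction s using Finset.cons_induction with
  | empty => rfl
  | cons a s ha ih => rw [Finset.sum_cons, Finset.sum_cons, PiLp.add_apply, ih]

lemma stmt7_normsq {m : ℕ} (u : EuclideanSpace ℝ (Fin m)) : ‖u‖ ^ 2 = ∑ k, (u k) ^ 2 := by
  rw [EuclideanSpace.norm_eq, Real.sq_sqrt (by positivity)]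
  simp [sq_abs]

lemma stmt7_matAction {n p : ℕ} (M : Matrix (Fin n) (Fin n) ℝ)
    (x : Fin n → EuclideanSpace ℝ (Fin p)) :
    ∑ i, ‖∑ j, M i j • x j‖ ^ 2 ≤
      ‖Matrix.toEuclideanCLM (n := Fin n) (𝕜 := ℝ) M‖ ^ 2 * ∑ i, ‖x i‖ ^ 2 := by
  have h1 : ∑ i, ‖∑ j, M i j • x j‖ ^ 2
      = ∑ k, ∑ i, (∑ j, M i j * x j k) ^ 2 := by
    rw [Finset.sum_comm]
    refine Finset.sum_congr rfl fun i _ => ?_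
    rw [stmt7_normsq]
    refine Finset.sum_congr rfl fun k _ => ?_
    rw [stmt7_sum_apply]
    simp [PiLp.smul_apply]
  have h2 : ∑ i, ‖x i‖ ^ 2 = ∑ k, ∑ i, (x i k) ^ 2 := by
    rw [Finset.sum_comm]
    exact Finset.sum_congr rfl fun i _ => stmt7_normsq _
  rw [h1, h2, Finset.mul_sum]
  refine Finset.sum_le_sum fun k _ => ?_
  set T := Matrix.toEuclideanCLM (n := Fin n) (𝕜 := ℝ) M
  set c : EuclideanSpace ℝ (Fin n) := (WithLp.equiv 2 _).symm (fun j => x j k) with hc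
  have happ : ∀ i, (T c) i = ∑ j, M i j * x j k := by
    intro i
    rw [hc, WithLp.equiv_symm_apply, Matrix.toEuclideanCLM_toLp, PiLp.toLp_apply]
    simp [Matrix.mulVec, dotProduct]
  have hnc : ‖c‖ ^ 2 = ∑ i, (x i k) ^ 2 := by
    rw [stmt7_normsq]
    refine Finset.sum_congr rfl fun i _ => ?_
    rw [hc, WithLp.equiv_symm_apply, PiLp.toLp_apply]
  calc ∑ i, (∑ j, M i j * x j k) ^ 2 = ‖T c‖ ^ 2 := by
        rw [stmt7_normsq]
        exact Finset.sum_congr rfl fun i _ => by rw [happ]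
    _ ≤ (‖T‖ * ‖c‖) ^ 2 := by
        have := T.le_opNorm c
        have h0 : (0:ℝ) ≤ ‖T c‖ := norm_nonneg _
        nlinarith [norm_nonneg (T c), norm_nonneg c, norm_nonneg T]
    _ = ‖T‖ ^ 2 * ∑ i, (x i k) ^ 2 := by rw [mul_pow, hnc]

noncomputable def stmt7N {n p : ℕ} (f : Fin n → EuclideanSpace ℝ (Fin p)) : ℝ :=
  ‖(WithLp.equiv 2 (∀ _ : Fin n, EuclideanSpace ℝ (Fin p))).symm f‖

lemma stmt7N_nonneg {n p : ℕ} (f : Fin n → EuclideanSpace ℝ (Fin p)) : 0 ≤ stmt7N f :=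
  norm_nonneg _

lemma stmt7N_sq {n p : ℕ} (f : Fin n → EuclideanSpace ℝ (Fin p)) :
    stmt7N f ^ 2 = ∑ i, ‖f i‖ ^ 2 := by
  rw [stmt7N, PiLp.norm_sq_eq_of_L2]
  exact Finset.sum_congr rfl fun i _ => by rw [WithLp.equiv_symm_apply, PiLp.toLp_apply]

lemma stmt7N_add {n p : ℕ} (f g : Fin n → EuclideanSpace ℝ (Fin p)) :
    stmt7N (fun i => f i + g i) ≤ stmt7N f + stmt7N g := by
  have h : (WithLp.equiv 2 (∀ _ : Fin n, EuclideanSpace ℝ (Fin p))).symm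
      (fun i => f i + g i) = (WithLp.equiv 2 _).symm f + (WithLp.equiv 2 _).symm g := by
    rw [WithLp.equiv_symm_apply, ← WithLp.toLp_add]
    rfl
  rw [stmt7N, h]
  exact norm_add_le _ _
  
lemma stmt7N_smul {n p : ℕ} (c : ℝ) (hc : 0 ≤ c) (f : Fin n → EuclideanSpace ℝ (Fin p)) :
    stmt7N (fun i => c • f i) = c * stmt7N f := by
  have h : (WithLp.equiv 2 (∀ _ : Fin n, EuclideanSpace ℝ (Fin p))).symm
      (fun i => c • f i) = c • (WithLp.equiv 2 _).symm f := by
    rw [WithLp.equiv_symm_apply, ← WithLp.toLp_smul]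
    rfl
  rw [stmt7N, h, norm_smul, Real.norm_of_nonneg hc, stmt7N]

lemma stmt7_sqle (a b : ℝ) (hb : 0 ≤ b) (h : a ^ 2 ≤ b ^ 2) : a ≤ b := by
  nlinarith [le_abs_self a, sq_abs a, abs_nonneg a]

lemma stmt7N_le {n p : ℕ} (f : Fin n → EuclideanSpace ℝ (Fin p)) (B : ℝ) (hB : 0 ≤ B)
    (h : ∑ i, ‖f i‖ ^ 2 ≤ B ^ 2) : stmt7N f ≤ B := by
  refine stmt7_sqle _ _ hB ?_
  rw [stmt7N_sq]; exact h

lemma stmt7N_coord {n p : ℕ} (f : Fin n → EuclideanSpace ℝ (Fin p)) (i : Fin n) :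
    ‖f i‖ ≤ stmt7N f := by
  refine stmt7_sqle _ _ (stmt7N_nonneg f) ?_
  rw [stmt7N_sq]
  exact Finset.single_le_sum (f := fun j => ‖f j‖ ^ 2) (fun j _ => by positivity)
    (Finset.mem_univ i)
set_option maxHeartbeats 1600000 in
theorem stmt7 {n p : ℕ} (hn : 0 < n) (T : ℕ) (hT : 0 < T)
    (W : Matrix (Fin n) (Fin n) ℝ)
    (hsymm : W.IsSymm)
    (hnonneg : ∀ i j, 0 ≤ W i j)
    (hrow : ∀ i, ∑ j, W i j = 1)
    (hcol : ∀ j, ∑ i, W i j = 1)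
    (β : ℝ) (hβ0 : 0 ≤ β) (hβ1 : β < 1)
    (hWnorm : ∀ k : ℕ, 1 ≤ k →
      ‖Matrix.toEuclideanCLM (n := Fin n) (𝕜 := ℝ)
        (W ^ k - (n : ℝ)⁻¹ • Matrix.of (fun _ _ => (1 : ℝ)))‖ ≤ β ^ k)
    (D : ℝ)
    (y v : ℕ → Fin n → EuclideanSpace ℝ (Fin p))
    (hy0 : ∀ i, y 0 i = 0)
    (hupd : ∀ t : ℕ, ∀ i, y (t + 1) i =
      (∑ j, W i j • y t j) + ((n : ℝ) / (T : ℝ)) • v (t + 1) i)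
    (hv : ∀ t : ℕ, 1 ≤ t → Real.sqrt (∑ i, ‖v t i‖ ^ 2) ≤ D) :
    ∀ t ≤ T, ∀ i,
      ‖y t i - (n : ℝ)⁻¹ • ∑ j, y t j‖ ≤
        (n : ℝ) ^ ((3 : ℝ) / 2) * D / ((T : ℝ) * (1 - β)) := by
  have hnR : (0:ℝ) < n := by exact_mod_cast hn
  have hTR : (0:ℝ) < T := by exact_mod_cast hT
  have h1β : (0:ℝ) < 1 - β := by linarith
  have hD0 : 0 ≤ D := le_trans (Real.sqrt_nonneg _) (hv 1 le_rfl)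
  set c : ℝ := (n:ℝ)/(T:ℝ) with hc
  have hc0 : 0 ≤ c := by positivity
  set e : ℕ → Fin n → EuclideanSpace ℝ (Fin p) :=
    fun t i => y t i - (n:ℝ)⁻¹ • ∑ j, y t j with he
  have hsum_e : ∀ t, ∑ j, e t j = 0 := by
    intro t
    simp only [he, Finset.sum_sub_distrib, Finset.sum_const, Finset.card_univ,
      Fintype.card_fin]
    rw [← Nat.cast_smul_eq_nsmul ℝ, smul_smul, mul_inv_cancel₀ (ne_of_gt hnR),
      one_smul, sub_self]
  have hrec : ∀ t i, e (t+1) i = (∑ j, W i j • e t j)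
      + c • (v (t+1) i - (n:ℝ)⁻¹ • ∑ j, v (t+1) j) := by
    intro t i
    have hsumy : ∑ j, y (t+1) j = (∑ j, y t j) + c • ∑ j, v (t+1) j := by
      have : ∀ j, y (t+1) j = (∑ k, W j k • y t k) + c • v (t+1) j := hupd t
      rw [Finset.sum_congr rfl (fun j _ => this j), Finset.sum_add_distrib]
      congr 1
      · rw [Finset.sum_comm]
        refine Finset.sum_congr rfl fun k _ => ?_
        rw [← Finset.sum_smul, hcol, one_smul]
      · rw [← Finset.smul_sum]
    have hW1 : ∑ j, W i j • ((n:ℝ)⁻¹ • ∑ k, y t k) = (n:ℝ)⁻¹ • ∑ k, y t k := by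
      rw [← Finset.sum_smul, hrow, one_smul]
    have hexp : ∑ j, W i j • e t j
        = (∑ j, W i j • y t j) - (n:ℝ)⁻¹ • ∑ k, y t k := by
      simp only [he, smul_sub, Finset.sum_sub_distrib, hW1]
    calc e (t+1) i = y (t+1) i - (n:ℝ)⁻¹ • ∑ j, y (t+1) j := rfl
      _ = ((∑ j, W i j • y t j) + c • v (t+1) i)
          - (n:ℝ)⁻¹ • ((∑ j, y t j) + c • ∑ j, v (t+1) j) := by
            rw [hsumy, hupd t i]
      _ = (∑ j, W i j • e t j) + c • (v (t+1) i - (n:ℝ)⁻¹ • ∑ j, v (t+1) j) := by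
            rw [hexp]
            module
  set M : Matrix (Fin n) (Fin n) ℝ :=
    W - (n : ℝ)⁻¹ • Matrix.of (fun _ _ => (1 : ℝ)) with hM
  have hMe : ∀ t i, ∑ j, W i j • e t j = ∑ j, M i j • e t j := by
    intro t i
    simp only [hM, Matrix.sub_apply, Matrix.smul_apply, Matrix.of_apply,
      smul_eq_mul, mul_one, sub_smul, Finset.sum_sub_distrib, ← Finset.smul_sum,
      hsum_e, smul_zero, sub_zero]
  have hMn : ‖Matrix.toEuclideanCLM (n := Fin n) (𝕜 := ℝ) M‖ ≤ β := by
    have h := hWnorm 1 le_rfl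
    rw [pow_one, pow_one] at h
    rw [hM]
    exact h
  have hstep : ∀ t, stmt7N (e (t+1)) ≤ β * stmt7N (e t) + c * D := by
    intro t
    set pv : Fin n → EuclideanSpace ℝ (Fin p) :=
      fun i => v (t+1) i - (n:ℝ)⁻¹ • ∑ j, v (t+1) j with hpv
    have hfe : e (t+1) = fun i => (∑ j, M i j • e t j) + c • pv i := by
      funext i
      rw [hrec t i, hMe t i, hpv]
    have hw : stmt7N (fun i => ∑ j, M i j • e t j) ≤ β * stmt7N (e t) := by
      refine stmt7_sqle _ _ (mul_nonneg hβ0 (stmt7N_nonneg _)) ?_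
      rw [stmt7N_sq, mul_pow, stmt7N_sq]
      refine le_trans (stmt7_matAction M (e t)) ?_
      have h0 : (0:ℝ) ≤ ∑ i, ‖e t i‖ ^ 2 := by positivity
      have h1 : ‖Matrix.toEuclideanCLM (n := Fin n) (𝕜 := ℝ) M‖ ^ 2 ≤ β ^ 2 := by
        nlinarith [norm_nonneg (Matrix.toEuclideanCLM (n := Fin n) (𝕜 := ℝ) M)]
      exact mul_le_mul_of_nonneg_right h1 h0
    have hp : stmt7N pv ≤ D := by
      refine stmt7N_le _ _ hD0 ?_
      set m : EuclideanSpace ℝ (Fin p) := (n:ℝ)⁻¹ • ∑ j, v (t+1) j with hm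
      have hsv : ∑ j, v (t+1) j = (n:ℝ) • m := by
        rw [hm, smul_smul, mul_inv_cancel₀ (ne_of_gt hnR), one_smul]
      have hexp : ∀ i : Fin n, ‖v (t+1) i - m‖ ^ 2
          = ‖v (t+1) i‖ ^ 2 - 2 * (inner ℝ (v (t+1) i) m : ℝ) + ‖m‖ ^ 2 :=
        fun i => norm_sub_sq_real _ _
      have hin : ∑ i : Fin n, (inner ℝ (v (t+1) i) m : ℝ) = (n:ℝ) * ‖m‖ ^ 2 := by
        rw [← sum_inner, hsv, real_inner_smul_left, real_inner_self_eq_norm_sq]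
      have hcard : ∑ _i : Fin n, ‖m‖ ^ 2 = (n:ℝ) * ‖m‖ ^ 2 := by
        rw [Finset.sum_const, Finset.card_univ, Fintype.card_fin, nsmul_eq_mul]
      have hproj : ∑ i, ‖pv i‖ ^ 2 ≤ ∑ i, ‖v (t+1) i‖ ^ 2 := by
        have heq : ∑ i, ‖pv i‖ ^ 2
            = ∑ i, ‖v (t+1) i‖ ^ 2 - 2 * ((n:ℝ) * ‖m‖ ^ 2) + (n:ℝ) * ‖m‖ ^ 2 := by
          rw [show ∑ i, ‖pv i‖ ^ 2 = ∑ i, ‖v (t+1) i - m‖ ^ 2 from rfl]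
          simp only [hexp, Finset.sum_add_distrib, Finset.sum_sub_distrib,
            ← Finset.mul_sum, hin, hcard]
        rw [heq]
        nlinarith [sq_nonneg ‖m‖]
      have hvs : ∑ i, ‖v (t+1) i‖ ^ 2 ≤ D ^ 2 := by
        have h1 := hv (t+1) (Nat.le_add_left 1 t)
        have h2 : (0:ℝ) ≤ ∑ i, ‖v (t+1) i‖ ^ 2 := by positivity
        nlinarith [Real.sq_sqrt h2, Real.sqrt_nonneg (∑ i, ‖v (t+1) i‖ ^ 2)]
      exact le_trans hproj hvs
    calc stmt7N (e (t+1))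
        ≤ stmt7N (fun i => ∑ j, M i j • e t j) + stmt7N (fun i => c • pv i) := by
          rw [hfe]
          exact stmt7N_add (fun i => ∑ j, M i j • e t j) (fun i => c • pv i)
      _ = stmt7N (fun i => ∑ j, M i j • e t j) + c * stmt7N pv := by
          rw [stmt7N_smul c hc0]
      _ ≤ β * stmt7N (e t) + c * D := by
          have h2 := mul_le_mul_of_nonneg_left hp hc0
          linarith
  have main : ∀ t, stmt7N (e t) ≤ c * D * ∑ k ∈ Finset.range t, β ^ k := by
    intro t
    induction t with
    | zero =>
      have h0 : e 0 = fun _ => 0 := by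
        funext i
        simp [he, hy0]
      rw [h0]
      have : stmt7N (n := n) (p := p) (fun _ => 0) = 0 := by
        refine le_antisymm ?_ (stmt7N_nonneg _)
        refine stmt7N_le _ _ le_rfl ?_
        simp
      simp [this]
    | succ t ih =>
      calc stmt7N (e (t+1)) ≤ β * stmt7N (e t) + c * D := hstep t
        _ ≤ β * (c * D * ∑ k ∈ Finset.range t, β ^ k) + c * D := by
            have := mul_le_mul_of_nonneg_left ih hβ0
            linarith
        _ = c * D * ∑ k ∈ Finset.range (t+1), β ^ k := by
            rw [geom_sum_succ]
            ring
  intro t _ i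
  have hgeom : ∑ k ∈ Finset.range t, β ^ k ≤ (1 - β)⁻¹ := by
    rw [geom_sum_eq (by intro h; rw [h] at hβ1; exact lt_irrefl 1 hβ1) t]
    rw [div_le_iff_of_neg (by linarith : β - 1 < 0)]
    have h1 : (1 - β)⁻¹ * (β - 1) = -1 := by
      field_simp
      ring
    rw [h1]
    nlinarith [pow_nonneg hβ0 t]
  have hfinal : ‖e t i‖ ≤ c * D * (1 - β)⁻¹ := by
    calc ‖e t i‖ ≤ stmt7N (e t) := stmt7N_coord _ i
      _ ≤ c * D * ∑ k ∈ Finset.range t, β ^ k := main t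
      _ ≤ c * D * (1 - β)⁻¹ := by
          have hcd : 0 ≤ c * D := by positivity
          exact mul_le_mul_of_nonneg_left hgeom hcd
  have hpow : (n:ℝ) ≤ (n:ℝ) ^ ((3:ℝ)/2) := by
    nth_rewrite 1 [← Real.rpow_one (n:ℝ)]
    apply Real.rpow_le_rpow_of_exponent_le
    · exact_mod_cast hn
    · norm_num
  calc ‖y t i - (n:ℝ)⁻¹ • ∑ j, y t j‖ = ‖e t i‖ := rfl
    _ ≤ c * D * (1 - β)⁻¹ := hfinal
    _ = (n:ℝ) * D / ((T:ℝ) * (1 - β)) := by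
        rw [hc]; field_simp
    _ ≤ (n:ℝ) ^ ((3:ℝ)/2) * D / ((T:ℝ) * (1 - β)) := by gcongr
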